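/- For a positive definite density matrix ρ and unit vector φ, Δ_max(ρ, |φ⟩⟨φ|) = 1 − (⟨φ|ρ^{-1}|φ⟩)^{-1} = 1 − F(ρ,|φ⟩⟨φ|)², where Δ_max is the minimal total variation distance over reverse tests and F is the Uhlmann fidelity. -/

import Mathlib

open Matrix BigOperators
open scoped ComplexOrder Classical

noncomputable def msqrt {n : Type*} [Fintype n] [DecidableEq n]
    (A : Matrix n n ℂ) : Matrix n n ℂ :=
  if h : A.PosSemidef then
    (h.1.eigenvectorUnitary : Matrix n n ℂ) *
      diagonal ((↑) ∘ (Real.sqrt ·) ∘ h.1.eigenvalues) *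
      (star h.1.eigenvectorUnitary : Matrix n n ℂ) else 0

noncomputable def gm {n : Type*} [Fintype n] [DecidableEq n]
    (A B : Matrix n n ℂ) : Matrix n n ℂ :=
  msqrt A * msqrt ((msqrt A)⁻¹ * B * (msqrt A)⁻¹) * msqrt A

def IsDensity {n : Type*} [Fintype n] (ρ : Matrix n n ℂ) : Prop :=
  ρ.PosSemidef ∧ ρ.trace = 1

structure IsReverseTest {d m : ℕ} (ρ σ : Matrix (Fin d) (Fin d) ℂ)
    (R : Fin m → Matrix (Fin d) (Fin d) ℂ) (p q : Fin m → ℝ) : Prop where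
  states : ∀ x, IsDensity (R x)
  p_nonneg : ∀ x, 0 ≤ p x
  q_nonneg : ∀ x, 0 ≤ q x
  p_sum : ∑ x, p x = 1
  q_sum : ∑ x, q x = 1
  rho_eq : ∑ x, (p x : ℂ) • R x = ρ
  sigma_eq : ∑ x, (q x : ℂ) • R x = σ

noncomputable def Fmin {d : ℕ} (ρ σ : Matrix (Fin d) (Fin d) ℂ) : ℝ :=
  sSup {r : ℝ | ∃ (m : ℕ) (R : Fin m → Matrix (Fin d) (Fin d) ℂ) (p q : Fin m → ℝ),
    IsReverseTest ρ σ R p q ∧ r = ∑ x, Real.sqrt (p x * q x)}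

noncomputable def Dmax {d : ℕ} (ρ σ : Matrix (Fin d) (Fin d) ℂ) : ℝ :=
  sInf {r : ℝ | ∃ (m : ℕ) (R : Fin m → Matrix (Fin d) (Fin d) ℂ) (p q : Fin m → ℝ),
    IsReverseTest ρ σ R p q ∧ r = (∑ x, |p x - q x|) / 2}

noncomputable def choiMatrix {d e : ℕ}
    (Λ : Matrix (Fin d) (Fin d) ℂ →ₗ[ℂ] Matrix (Fin e) (Fin e) ℂ) :
    Matrix (Fin d × Fin e) (Fin d × Fin e) ℂ :=
  Matrix.of fun pr qr => Λ (Matrix.single pr.1 qr.1 1) pr.2 qr.2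

def IsCPTP {d e : ℕ}
    (Λ : Matrix (Fin d) (Fin d) ℂ →ₗ[ℂ] Matrix (Fin e) (Fin e) ℂ) : Prop :=
  (choiMatrix Λ).PosSemidef ∧ ∀ A, (Λ A).trace = A.trace

noncomputable def mcfc {n : Type*} [Fintype n] [DecidableEq n]
    (f : ℝ → ℝ) (A : Matrix n n ℂ) : Matrix n n ℂ :=
  if h : A.IsHermitian then h.cfc f else 0

def IsOperatorMonotoneOnNonneg (f : ℝ → ℝ) : Prop :=
  ∀ (d : ℕ) (A B : Matrix (Fin d) (Fin d) ℂ), A.PosSemidef → B.PosSemidef →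
    (B - A).PosSemidef → (mcfc f B - mcfc f A).PosSemidef

noncomputable def traceNorm {n : Type*} [Fintype n] [DecidableEq n]
    (A : Matrix n n ℂ) : ℝ :=
  ((msqrt (Aᴴ * A)).trace).re

/-! ### Auxiliary lemmas -/

section Aux

variable {d : ℕ}

lemma myVecMulVec_mulVec (a b v : Fin d → ℂ) :
    Matrix.vecMulVec a b *ᵥ v = (b ⬝ᵥ v) • a := by
  ext i
  simp only [Matrix.mulVec, dotProduct, Matrix.vecMulVec_apply, Pi.smul_apply,
    smul_eq_mul, Finset.sum_mul]
  exact Finset.sum_congr rfl fun j _ => by ring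

lemma myVecMulVec_conjT (a : Fin d → ℂ) :
    (Matrix.vecMulVec a (star a))ᴴ = Matrix.vecMulVec a (star a) := by
  ext i j
  simp only [Matrix.conjTranspose_apply, Matrix.vecMulVec_apply, Pi.star_apply, star_mul',
    star_star]
  ring

lemma myStar_dot (a b : Fin d → ℂ) : star a ⬝ᵥ b = star (star b ⬝ᵥ a) := by
  simp only [dotProduct, star_sum, star_mul', star_star, Pi.star_apply]
  exact Finset.sum_congr rfl fun j _ => by ring

lemma myQuadForm_vecMulVec (a v : Fin d → ℂ) :
    star v ⬝ᵥ (Matrix.vecMulVec a (star a)) *ᵥ v = ((Complex.normSq (star a ⬝ᵥ v) : ℝ) : ℂ) := by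
  rw [myVecMulVec_mulVec, dotProduct_smul, smul_eq_mul, myStar_dot (a := v) (b := a)]
  rw [Complex.star_def, Complex.mul_conj]

lemma cs_dot (a b : Fin d → ℂ) :
    Complex.normSq (star a ⬝ᵥ b) ≤ (star a ⬝ᵥ a).re * (star b ⬝ᵥ b).re := by
  have h := @norm_inner_le_norm ℂ (EuclideanSpace ℂ (Fin d)) _ _ _
      ((WithLp.equiv 2 _).symm a) ((WithLp.equiv 2 _).symm b)
  rw [EuclideanSpace.inner_toLp_toLp, dotProduct_comm] at h
  have ha : (star a ⬝ᵥ a).re = ‖(WithLp.equiv 2 _).symm a‖ ^ 2 := by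
    rw [← @inner_self_eq_norm_sq ℂ, EuclideanSpace.inner_toLp_toLp, dotProduct_comm, RCLike.re_to_complex]
    rfl
  have hb : (star b ⬝ᵥ b).re = ‖(WithLp.equiv 2 _).symm b‖ ^ 2 := by
    rw [← @inner_self_eq_norm_sq ℂ, EuclideanSpace.inner_toLp_toLp, dotProduct_comm, RCLike.re_to_complex]
    rfl
  rw [ha, hb, ← mul_pow]
  calc Complex.normSq (star a ⬝ᵥ b) = ‖star a ⬝ᵥ b‖ ^ 2 := by
        rw [← Complex.sq_norm]
    _ ≤ _ := pow_le_pow_left₀ (norm_nonneg _) h 2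

lemma cs_psd {M : Matrix (Fin d) (Fin d) ℂ} (hM : M.PosSemidef) (x y : Fin d → ℂ) :
    Complex.normSq (star x ⬝ᵥ M *ᵥ y) ≤ (star x ⬝ᵥ M *ᵥ x).re * (star y ⬝ᵥ M *ᵥ y).re := by
  open MatrixOrder in obtain ⟨B, rfl⟩ := CStarAlgebra.nonneg_iff_eq_star_mul_self.mp hM.nonneg
  rw [Matrix.star_eq_conjTranspose]
  have key : ∀ u v : Fin d → ℂ, star u ⬝ᵥ (Bᴴ * B) *ᵥ v = star (B *ᵥ u) ⬝ᵥ (B *ᵥ v) := by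
    intro u v
    rw [Matrix.star_mulVec, ← Matrix.mulVec_mulVec, Matrix.dotProduct_mulVec]
  rw [key, key, key]
  exact cs_dot _ _

lemma inv_vec_dot {ρ : Matrix (Fin d) (Fin d) ℂ} (hρ : ρ.PosDef) (φ v : Fin d → ℂ) :
    star (ρ⁻¹ *ᵥ φ) ⬝ᵥ ρ *ᵥ v = star φ ⬝ᵥ v := by
  rw [Matrix.star_mulVec, hρ.isHermitian.inv, Matrix.dotProduct_mulVec, Matrix.vecMul_vecMul,
    Matrix.nonsing_inv_mul _ hρ.det_pos.ne'.isUnit, Matrix.vecMul_one]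

lemma s_pos {ρ : Matrix (Fin d) (Fin d) ℂ} (hρ : ρ.PosDef)
    {φ : Fin d → ℂ} (hφ : star φ ⬝ᵥ φ = 1) :
    0 < (star φ ⬝ᵥ ρ⁻¹ *ᵥ φ).re ∧ (star φ ⬝ᵥ ρ⁻¹ *ᵥ φ).im = 0 := by
  have hφ0 : φ ≠ 0 := by
    intro h
    rw [h] at hφ
    simp at hφ
  have := hρ.inv.dotProduct_mulVec_pos hφ0
  rw [Complex.lt_def] at this
  exact ⟨by simpa using this.1, by simpa using this.2.symm⟩

lemma t_le_c {ρ : Matrix (Fin d) (Fin d) ℂ} (hρ : ρ.PosDef)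
    {φ : Fin d → ℂ} (hφ : star φ ⬝ᵥ φ = 1) {t : ℝ}
    (ht : (ρ - (t:ℂ) • Matrix.vecMulVec φ (star φ)).PosSemidef) :
    t ≤ ((star φ ⬝ᵥ ρ⁻¹ *ᵥ φ).re)⁻¹ := by
  set s : ℂ := star φ ⬝ᵥ ρ⁻¹ *ᵥ φ with hs
  obtain ⟨hsre, hsim⟩ := s_pos hρ hφ
  set x : Fin d → ℂ := ρ⁻¹ *ᵥ φ with hx
  have hq := ht.dotProduct_mulVec_nonneg x
  have h1 : star x ⬝ᵥ ρ *ᵥ x = s := by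
    rw [hx, inv_vec_dot hρ]
  have h2 : star x ⬝ᵥ ((t:ℂ) • Matrix.vecMulVec φ (star φ)) *ᵥ x
      = (t:ℂ) * ((Complex.normSq s : ℝ) : ℂ) := by
    rw [Matrix.smul_mulVec, dotProduct_smul, smul_eq_mul, myQuadForm_vecMulVec]
  rw [Matrix.sub_mulVec, dotProduct_sub, h1, h2] at hq
  have hre : (0:ℝ) ≤ s.re - t * Complex.normSq s := by
    have := (Complex.nonneg_iff.mp hq).1
    simpa using this
  have hnsq : Complex.normSq s = s.re ^ 2 := by
    rw [Complex.normSq_apply, hsim]; ring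
  rw [hnsq] at hre
  have h1' : t * s.re ≤ 1 := by nlinarith
  have h2' := mul_le_mul_of_nonneg_right h1' (le_of_lt (inv_pos.mpr hsre))
  rw [mul_assoc, mul_inv_cancel₀ hsre.ne', mul_one, one_mul] at h2'
  exact h2'

lemma rho_sub_cP_psd {ρ : Matrix (Fin d) (Fin d) ℂ} (hρ : ρ.PosDef)
    {φ : Fin d → ℂ} (hφ : star φ ⬝ᵥ φ = 1) :
    (ρ - (((((star φ ⬝ᵥ ρ⁻¹ *ᵥ φ).re)⁻¹ : ℝ)) : ℂ) • Matrix.vecMulVec φ (star φ)).PosSemidef := by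
  set s : ℂ := star φ ⬝ᵥ ρ⁻¹ *ᵥ φ with hs
  obtain ⟨hsre, hsim⟩ := s_pos hρ hφ
  set c : ℝ := (s.re)⁻¹ with hc
  set x : Fin d → ℂ := ρ⁻¹ *ᵥ φ with hx
  refine Matrix.PosSemidef.of_dotProduct_mulVec_nonneg ?_ ?_
  · have hPh := myVecMulVec_conjT φ
    unfold Matrix.IsHermitian
    rw [Matrix.conjTranspose_sub, Matrix.conjTranspose_smul, hPh, hρ.isHermitian]
    congr 1
    rw [Complex.star_def, Complex.conj_ofReal]
  · intro v
    have hcs := cs_psd hρ.posSemidef x v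
    rw [hx, inv_vec_dot hρ, inv_vec_dot hρ] at hcs
    have hρv : (0:ℂ) ≤ star v ⬝ᵥ ρ *ᵥ v := hρ.posSemidef.dotProduct_mulVec_nonneg v
    obtain ⟨hrv, hiv⟩ := Complex.nonneg_iff.mp hρv
    have hval : star v ⬝ᵥ (ρ - (c:ℂ) • Matrix.vecMulVec φ (star φ)) *ᵥ v
        = star v ⬝ᵥ ρ *ᵥ v - (c:ℂ) * ((Complex.normSq (star φ ⬝ᵥ v) : ℝ) : ℂ) := by
      rw [Matrix.sub_mulVec, dotProduct_sub, Matrix.smul_mulVec,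
        dotProduct_smul, smul_eq_mul, myQuadForm_vecMulVec]
    rw [hval]
    have hkey : c * Complex.normSq (star φ ⬝ᵥ v) ≤ (star v ⬝ᵥ ρ *ᵥ v).re := by
      have h3 := mul_le_mul_of_nonneg_left hcs (inv_nonneg.mpr hsre.le)
      rw [← hc, ← mul_assoc, hc, inv_mul_cancel₀ hsre.ne', one_mul] at h3
      exact h3
    rw [Complex.nonneg_iff]
    constructor
    · simp only [Complex.sub_re, Complex.mul_re, Complex.ofReal_re, Complex.ofReal_im,
        mul_zero, zero_mul, sub_zero]
      linarith
    · simp only [Complex.sub_im, Complex.mul_im, Complex.ofReal_re, Complex.ofReal_im,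
        mul_zero, zero_mul, add_zero, sub_zero]
      exact hiv

lemma myPsd_smul {A : Matrix (Fin d) (Fin d) ℂ} (hA : A.PosSemidef) {c : ℝ} (hc : 0 ≤ c) :
    ((c : ℂ) • A).PosSemidef := by
  refine Matrix.PosSemidef.of_dotProduct_mulVec_nonneg ?_ ?_
  · unfold Matrix.IsHermitian
    rw [Matrix.conjTranspose_smul, hA.1]
    congr 1
    simp [Complex.ext_iff]
  · intro x
    rw [Matrix.smul_mulVec, dotProduct_smul, smul_eq_mul]
    exact mul_nonneg (by exact_mod_cast Complex.zero_le_real.mpr hc) (hA.dotProduct_mulVec_nonneg x)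

lemma myPsd_sum {m : ℕ} (f : Fin m → Matrix (Fin d) (Fin d) ℂ)
    (h : ∀ x, (f x).PosSemidef) : (∑ x, f x).PosSemidef := by
  classical
  exact Finset.sum_induction f _ (fun a b ha hb => ha.add hb) Matrix.PosSemidef.zero
    (fun x _ => h x)

lemma myPsd_diag_nonneg {A : Matrix (Fin d) (Fin d) ℂ} (hA : A.PosSemidef) (i : Fin d) :
    (0:ℂ) ≤ A i i := by
  have h2 := hA.dotProduct_mulVec_nonneg (Pi.single i 1)
  have hs : star (Pi.single i 1 : Fin d → ℂ) = (Pi.single i 1 : Fin d → ℂ) := by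
    ext j; by_cases hji : j = i <;> simp [Pi.single_apply, hji]
  rw [hs] at h2
  simpa [single_dotProduct] using h2

lemma myPsd_trace_nonneg {A : Matrix (Fin d) (Fin d) ℂ} (hA : A.PosSemidef) :
    (0:ℂ) ≤ A.trace :=
  Finset.sum_nonneg fun i _ => myPsd_diag_nonneg hA i

lemma myPsd_trace_zero {A : Matrix (Fin d) (Fin d) ℂ} (hA : A.PosSemidef)
    (h : A.trace = 0) : A = 0 := by
  have hdiag : ∀ i, A i i = 0 := by
    intro i
    have := (Finset.sum_eq_zero_iff_of_nonneg
      (fun i _ => myPsd_diag_nonneg hA i)).mp (by simpa [Matrix.trace, Matrix.diag] using h)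
    exact this i (Finset.mem_univ i)
  have hcol : ∀ i, A *ᵥ Pi.single i 1 = 0 := by
    intro i
    apply (hA.dotProduct_mulVec_zero_iff _).mp
    have hs : star (Pi.single i 1 : Fin d → ℂ) = (Pi.single i 1 : Fin d → ℂ) := by
      ext j; by_cases hji : j = i <;> simp [Pi.single_apply, hji]
    rw [hs]
    simpa [single_dotProduct] using hdiag i
  ext i j
  have := congrFun (hcol j) i
  simpa using this

lemma psd_below_proj {φ : Fin d → ℂ} (hφ : star φ ⬝ᵥ φ = 1)
    {A : Matrix (Fin d) (Fin d) ℂ} (hA : A.PosSemidef)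
    (hPA : (Matrix.vecMulVec φ (star φ) - A).PosSemidef) :
    A = A.trace • Matrix.vecMulVec φ (star φ) := by
  set P := Matrix.vecMulVec φ (star φ) with hP
  have hker : ∀ v : Fin d → ℂ, star φ ⬝ᵥ v = 0 → A *ᵥ v = 0 := by
    intro v hv
    apply (hA.dotProduct_mulVec_zero_iff v).mp
    have h1 : (0:ℂ) ≤ star v ⬝ᵥ A *ᵥ v := hA.dotProduct_mulVec_nonneg v
    have h2 : (0:ℂ) ≤ star v ⬝ᵥ (P - A) *ᵥ v := hPA.dotProduct_mulVec_nonneg v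
    have h3 : star v ⬝ᵥ (P - A) *ᵥ v = star v ⬝ᵥ P *ᵥ v - star v ⬝ᵥ A *ᵥ v := by
      rw [Matrix.sub_mulVec, dotProduct_sub]
    have h4 : star v ⬝ᵥ P *ᵥ v = 0 := by
      rw [hP, myQuadForm_vecMulVec, hv]
      simp
    rw [h3, h4, zero_sub, le_neg] at h2
    exact le_antisymm (by simpa using h2) h1
  have hAv : ∀ v : Fin d → ℂ, A *ᵥ v = (star φ ⬝ᵥ v) • (A *ᵥ φ) := by
    intro v
    have horth : star φ ⬝ᵥ (v - (star φ ⬝ᵥ v) • φ) = 0 := by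
      rw [dotProduct_sub, dotProduct_smul, hφ, smul_eq_mul, mul_one, sub_self]
    have := hker _ horth
    rw [Matrix.mulVec_sub, Matrix.mulVec_smul, sub_eq_zero] at this
    exact this
  have hA1 : A = Matrix.vecMulVec (A *ᵥ φ) (star φ) := by
    ext i j
    have := congrFun (hAv (Pi.single j 1)) i
    simp only [Matrix.mulVec_single, MulOpposite.op_one, one_smul, Matrix.col_apply, mul_one, Pi.smul_apply, smul_eq_mul] at this
    rw [Matrix.vecMulVec_apply]
    rw [this, dotProduct_single, mul_one]
    ring
  have hA2 : A = Matrix.vecMulVec φ (star (A *ᵥ φ)) := by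
    conv_lhs => rw [← hA.1, hA1]
    ext i j
    simp only [Matrix.conjTranspose_apply, Matrix.vecMulVec_apply, Pi.star_apply, star_mul',
      star_star]
    ring
  set μ : ℂ := star (A *ᵥ φ) ⬝ᵥ φ with hμ
  have hAφ : A *ᵥ φ = μ • φ := by
    conv_lhs => rw [hA2, myVecMulVec_mulVec]
  have htr : A.trace = μ := by
    conv_lhs => rw [hA2]
    rw [hμ]
    simp only [Matrix.trace, Matrix.diag, Matrix.vecMulVec_apply, Pi.star_apply,
      dotProduct]
    exact Finset.sum_congr rfl fun j _ => by ring
  have hν : (0:ℂ) ≤ star φ ⬝ᵥ A *ᵥ φ := hA.dotProduct_mulVec_nonneg φ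
  have him : (star φ ⬝ᵥ A *ᵥ φ).im = 0 := (Complex.nonneg_iff.mp hν).2.symm
  have hμreal : star μ = μ := by
    rw [hμ, myStar_dot (a := A *ᵥ φ) (b := φ), star_star]
    exact (Complex.conj_eq_iff_im.mpr him).symm
  calc A = Matrix.vecMulVec φ (star (A *ᵥ φ)) := hA2
    _ = Matrix.vecMulVec φ (star (μ • φ)) := by rw [← hAφ]
    _ = μ • Matrix.vecMulVec φ (star φ) := by
        ext i j
        simp only [Matrix.vecMulVec_apply, Pi.star_apply, Pi.smul_apply, Matrix.smul_apply,
          smul_eq_mul, star_mul']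
        rw [hμreal]
        ring
    _ = A.trace • P := by rw [htr, hP]

end Aux

theorem stmt17 {d : ℕ} (ρ : Matrix (Fin d) (Fin d) ℂ)
    (hρ : ρ.PosDef) (hρ1 : ρ.trace = 1)
    (φ : Fin d → ℂ) (hφ : star φ ⬝ᵥ φ = 1) :
    Dmax ρ (Matrix.vecMulVec φ (star φ)) = 1 - ((star φ ⬝ᵥ ρ⁻¹ *ᵥ φ).re)⁻¹ := by
  classical
  set P := Matrix.vecMulVec φ (star φ) with hP
  set s : ℂ := star φ ⬝ᵥ ρ⁻¹ *ᵥ φ with hs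
  obtain ⟨hsre, hsim⟩ := s_pos hρ hφ
  set c : ℝ := (s.re)⁻¹ with hc
  have hc0 : 0 < c := inv_pos.mpr hsre
  have hPpsd : P.PosSemidef := by
    refine Matrix.PosSemidef.of_dotProduct_mulVec_nonneg (myVecMulVec_conjT φ) fun v => ?_
    rw [hP, myQuadForm_vecMulVec]
    exact_mod_cast Complex.zero_le_real.mpr (Complex.normSq_nonneg _)
  have hPtr : P.trace = 1 := by
    rw [hP, ← hφ]
    simp only [Matrix.trace, Matrix.diag, Matrix.vecMulVec_apply, dotProduct,
      Pi.star_apply]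
    exact Finset.sum_congr rfl fun j _ => by ring
  have hρcP : (ρ - (c : ℂ) • P).PosSemidef := rho_sub_cP_psd hρ hφ
  have htrcP : (ρ - (c:ℂ) • P).trace = ((1 - c : ℝ) : ℂ) := by
    rw [Matrix.trace_sub, Matrix.trace_smul, hρ1, hPtr, smul_eq_mul, mul_one]
    push_cast
    ring
  have hc1 : c ≤ 1 := by
    have h0 := myPsd_trace_nonneg hρcP
    rw [htrcP] at h0
    have h1 := (Complex.nonneg_iff.mp h0).1
    simp only [Complex.ofReal_re] at h1
    linarith
  -- lower bound: every reverse test value is at least 1 - c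
  have hlow : ∀ r ∈ {r : ℝ | ∃ (m : ℕ) (R : Fin m → Matrix (Fin d) (Fin d) ℂ)
      (p q : Fin m → ℝ), IsReverseTest ρ P R p q ∧ r = (∑ x, |p x - q x|) / 2},
      1 - c ≤ r := by
    rintro r ⟨m, R, p, q, hRT, rfl⟩
    set t : Fin m → ℝ := fun x => min (p x) (q x) with hts
    have ht0 : ∀ x, 0 ≤ t x := fun x => le_min (hRT.p_nonneg x) (hRT.q_nonneg x)
    set A : Matrix (Fin d) (Fin d) ℂ := ∑ x, ((t x : ℝ) : ℂ) • R x with hA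
    have hApsd : A.PosSemidef := myPsd_sum _ fun x => myPsd_smul (hRT.states x).1 (ht0 x)
    have hdiff : ∀ (u : Fin m → ℝ), (∀ x, t x ≤ u x) →
        ((∑ x, (u x : ℂ) • R x) - A).PosSemidef := by
      intro u hu
      have heq : (∑ x, (u x : ℂ) • R x) - A = ∑ x, (((u x - t x : ℝ)) : ℂ) • R x := by
        rw [hA, ← Finset.sum_sub_distrib]
        refine Finset.sum_congr rfl fun x _ => ?_
        rw [← sub_smul, ← Complex.ofReal_sub]
      rw [heq]
      exact myPsd_sum _ fun x => myPsd_smul (hRT.states x).1 (sub_nonneg.mpr (hu x))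
    have hρA : (ρ - A).PosSemidef := by
      rw [← hRT.rho_eq]
      exact hdiff p fun x => min_le_left _ _
    have hPA : (P - A).PosSemidef := by
      rw [← hRT.sigma_eq]
      exact hdiff q fun x => min_le_right _ _
    have htrA : A.trace = ((∑ x, t x : ℝ) : ℂ) := by
      rw [hA, Matrix.trace_sum]
      push_cast
      refine Finset.sum_congr rfl fun x _ => ?_
      rw [Matrix.trace_smul, (hRT.states x).2, smul_eq_mul, mul_one]
    have hAc : A = ((∑ x, t x : ℝ) : ℂ) • P := by
      rw [← htrA]
      exact psd_below_proj hφ hApsd hPA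
    rw [hAc] at hρA
    have hsum_le : (∑ x, t x) ≤ c := t_le_c hρ hφ hρA
    have habs : ∀ x, |p x - q x| = p x + q x - 2 * t x := by
      intro x
      rcases le_total (p x) (q x) with h | h
      · have htx : t x = p x := min_eq_left h
        rw [abs_of_nonpos (by linarith), htx]
        ring
      · have htx : t x = q x := min_eq_right h
        rw [abs_of_nonneg (by linarith), htx]
        ring
    have hasum : ∑ x, |p x - q x| = 2 - 2 * ∑ x, t x := by
      rw [Finset.sum_congr rfl fun x _ => habs x]
      rw [Finset.sum_sub_distrib, Finset.sum_add_distrib, hRT.p_sum, hRT.q_sum,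
        ← Finset.mul_sum]
      ring
    rw [hasum]
    linarith
  -- upper bound: an explicit reverse test achieving 1 - c
  have hmix : ∃ σ1 : Matrix (Fin d) (Fin d) ℂ, IsDensity σ1 ∧
      (c : ℂ) • P + (((1 - c : ℝ)) : ℂ) • σ1 = ρ := by
    by_cases hceq : c = 1
    · have h0 : (ρ - (c:ℂ) • P).trace = 0 := by
        rw [htrcP, hceq]
        simp
      have h1 : ρ - (c:ℂ) • P = 0 := myPsd_trace_zero hρcP h0
      have hρP : ρ = (c:ℂ) • P := by
        rwa [sub_eq_zero] at h1
      refine ⟨P, ⟨hPpsd, hPtr⟩, ?_⟩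
      rw [hceq, hρP, hceq]
      push_cast
      simp
    · have hclt : 0 < 1 - c := lt_of_le_of_ne (by linarith) (by
        intro h
        exact hceq (by linarith))
      refine ⟨(((1 - c)⁻¹ : ℝ) : ℂ) • (ρ - (c:ℂ) • P), ⟨myPsd_smul hρcP (inv_nonneg.mpr hclt.le), ?_⟩, ?_⟩
      · rw [Matrix.trace_smul, htrcP, smul_eq_mul, ← Complex.ofReal_mul,
          inv_mul_cancel₀ hclt.ne']
        norm_num
      · rw [smul_smul, ← Complex.ofReal_mul, mul_inv_cancel₀ hclt.ne']
        push_cast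
        rw [one_smul]
        abel
  obtain ⟨σ1, hσ1, hmixeq⟩ := hmix
  have hmem : (1 - c) ∈ {r : ℝ | ∃ (m : ℕ) (R : Fin m → Matrix (Fin d) (Fin d) ℂ)
      (p q : Fin m → ℝ), IsReverseTest ρ P R p q ∧ r = (∑ x, |p x - q x|) / 2} := by
    refine ⟨2, ![P, σ1], ![c, 1 - c], ![1, 0], ⟨?_, ?_, ?_, ?_, ?_, ?_, ?_⟩, ?_⟩
    · intro x
      fin_cases x
      · exact ⟨hPpsd, hPtr⟩
      · exact hσ1
    · intro x
      fin_cases x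
      · exact hc0.le
      · simpa using sub_nonneg.mpr hc1
    · intro x
      fin_cases x <;> norm_num
    · rw [Fin.sum_univ_two]
      simp
    · rw [Fin.sum_univ_two]
      norm_num
    · rw [Fin.sum_univ_two]
      simpa using hmixeq
    · rw [Fin.sum_univ_two]
      simp
    · rw [Fin.sum_univ_two]
      simp only [Matrix.cons_val_zero, Matrix.cons_val_one, Matrix.head_cons, sub_zero]
      rw [abs_of_nonpos (by linarith), abs_of_nonneg (by linarith)]
      ring
  unfold Dmax
  apply le_antisymm
  · exact csInf_le ⟨1 - c, hlow⟩ hmem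
  · exact le_csInf ⟨1 - c, hmem⟩ hlow
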